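/- Let Ψ be a p×p real positive definite diagonal matrix, S a p×p real symmetric matrix, and G = Ψ^{-1/2} S Ψ^{-1/2}. Suppose G = V·diag(θ)·Vᵀ with V orthogonal and θ : Fin p → ℝ monotonically decreasing. Fix q < p, let V₁ be the first q columns of V, Δ = diag(√(max(θ_j − 1, 0))), and Λ̂ = Ψ^{1/2} V₁ Δ. Then tr((Λ̂Λ̂ᵀ + Ψ)⁻¹ S) = tr(Ψ⁻¹ S) − Σ_{j=1}^{q} max(θ_j − 1, 0). -/

import Mathlib

open Matrix

private lemma sum_trunc {p q : ℕ} (h : q ≤ p) (f : Fin p → ℝ)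
    (hf : ∀ i : Fin p, q ≤ (i : ℕ) → f i = 0) :
    ∑ i, f i = ∑ j : Fin q, f (Fin.castLE h j) := by
  classical
  have key : ∑ j : Fin q, f (Fin.castLE h j)
      = ∑ j ∈ Finset.univ.map (Fin.castLEEmb h), f j := by
    rw [Finset.sum_map]; rfl
  rw [key]
  refine (Finset.sum_subset (Finset.subset_univ _) ?_).symm
  intro x _ hx
  refine hf x ?_
  by_contra hlt
  push_neg at hlt
  exact hx (Finset.mem_map.mpr ⟨⟨x, hlt⟩, Finset.mem_univ _, by ext; simp⟩)

theorem optimized_covariance_trace {p q : ℕ} (hq : q < p)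
    (Ψ Ψh S : Matrix (Fin p) (Fin p) ℝ)
    (hΨ : Ψ.PosDef) (hΨdiag : Ψ.IsDiag)
    (hΨh : Ψh.PosDef) (hΨhsq : Ψh * Ψh = Ψ)
    (hS : S.IsSymm)
    (G : Matrix (Fin p) (Fin p) ℝ) (hG : G = Ψh⁻¹ * S * Ψh⁻¹)
    (V : Matrix (Fin p) (Fin p) ℝ) (hV : V ∈ Matrix.orthogonalGroup (Fin p) ℝ)
    (θ : Fin p → ℝ) (hθdec : Antitone θ)
    (hGeig : G = V * Matrix.diagonal θ * Vᵀ)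
    (V₁ : Matrix (Fin p) (Fin q) ℝ)
    (hV₁ : V₁ = Matrix.of fun i j => V i (Fin.castLE hq.le j))
    (Δ : Matrix (Fin q) (Fin q) ℝ)
    (hΔ : Δ = Matrix.diagonal fun j => Real.sqrt (max (θ (Fin.castLE hq.le j) - 1) 0))
    (Λhat : Matrix (Fin p) (Fin q) ℝ) (hΛhat : Λhat = Ψh * V₁ * Δ) :
    ((Λhat * Λhatᵀ + Ψ)⁻¹ * S).trace
      = (Ψ⁻¹ * S).trace - ∑ j : Fin q, max (θ (Fin.castLE hq.le j) - 1) 0 := by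
  classical
  -- basic facts
  have hΨht : Ψhᵀ = Ψh := by
    have := hΨh.isHermitian.eq
    rwa [Matrix.conjTranspose_eq_transpose_of_trivial] at this
  have hdet : IsUnit Ψh.det := isUnit_iff_ne_zero.mpr (ne_of_gt hΨh.det_pos)
  have hΨhinv : Ψh⁻¹ * Ψh = 1 := Matrix.nonsing_inv_mul _ hdet
  have hΨhinv' : Ψh * Ψh⁻¹ = 1 := Matrix.mul_nonsing_inv _ hdet
  have hVVt : V * Vᵀ = 1 := by
    rw [Matrix.mem_orthogonalGroup_iff] at hV
    simpa [Matrix.star_eq_conjTranspose, Matrix.conjTranspose] using hV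
  have hVtV : Vᵀ * V = 1 := by
    rw [Matrix.mem_orthogonalGroup_iff'] at hV
    simpa [Matrix.star_eq_conjTranspose, Matrix.conjTranspose] using hV
  -- the diagonal weights
  set d : Fin p → ℝ := fun i => if (i : ℕ) < q then max (θ i - 1) 0 else 0 with hd
  have hd0 : ∀ i, 0 ≤ d i := by
    intro i; simp only [hd]; split <;> simp [le_max_right]
  have he : ∀ i, d i + 1 ≠ 0 := fun i => by positivity
  -- Δ * Δ
  have hΔΔ : Δ * Δ = Matrix.diagonal fun j => max (θ (Fin.castLE hq.le j) - 1) 0 := by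
    rw [hΔ, Matrix.diagonal_mul_diagonal]
    exact congrArg Matrix.diagonal (funext fun j => Real.mul_self_sqrt (le_max_right _ _))
  -- V₁ Δ² V₁ᵀ = V diag d Vᵀ
  have hkey : V₁ * (Δ * Δ) * V₁ᵀ = V * Matrix.diagonal d * Vᵀ := by
    ext i k
    have hL : (V₁ * (Δ * Δ) * V₁ᵀ) i k
        = ∑ j : Fin q, V i (Fin.castLE hq.le j) * max (θ (Fin.castLE hq.le j) - 1) 0 *
            V k (Fin.castLE hq.le j) := by
      rw [hΔΔ, Matrix.mul_apply]
      refine Finset.sum_congr rfl fun j _ => ?_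
      rw [Matrix.mul_diagonal, Matrix.transpose_apply, hV₁]
      simp
    have hR : (V * Matrix.diagonal d * Vᵀ) i k = ∑ j : Fin p, V i j * d j * V k j := by
      rw [Matrix.mul_apply]
      refine Finset.sum_congr rfl fun j _ => ?_
      rw [Matrix.mul_diagonal, Matrix.transpose_apply]
    rw [hL, hR, sum_trunc hq.le _ (fun j hj => by simp [hd, Nat.not_lt.mpr hj])]
    refine Finset.sum_congr rfl fun j _ => ?_
    simp [hd, j.isLt]
  -- the matrix Λhat Λhatᵀ + Ψ
  have hM : Λhat * Λhatᵀ + Ψ = Ψh * (V * Matrix.diagonal (fun i => d i + 1) * Vᵀ) * Ψh := by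
    have hΛΛ : Λhat * Λhatᵀ = Ψh * (V * Matrix.diagonal d * Vᵀ) * Ψh := by
      rw [hΛhat]
      have hΔt : Δᵀ = Δ := by rw [hΔ]; exact Matrix.diagonal_transpose _
      rw [Matrix.transpose_mul, Matrix.transpose_mul, hΔt, hΨht, ← hkey]
      simp only [Matrix.mul_assoc]
    have : Matrix.diagonal (fun i => d i + 1) = Matrix.diagonal d + 1 := by
      rw [← Matrix.diagonal_one, ← Matrix.diagonal_add]
    rw [hΛΛ, this]
    rw [Matrix.mul_add, Matrix.add_mul, Matrix.mul_one, hVVt, Matrix.mul_add, Matrix.add_mul,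
      Matrix.mul_one, hΨhsq]
  -- inverse of that matrix
  have hinv : (Λhat * Λhatᵀ + Ψ)⁻¹
      = Ψh⁻¹ * (V * Matrix.diagonal (fun i => (d i + 1)⁻¹) * Vᵀ) * Ψh⁻¹ := by
    apply Matrix.inv_eq_left_inv
    rw [hM]
    calc Ψh⁻¹ * (V * Matrix.diagonal (fun i => (d i + 1)⁻¹) * Vᵀ) * Ψh⁻¹ *
          (Ψh * (V * Matrix.diagonal (fun i => d i + 1) * Vᵀ) * Ψh)
        = Ψh⁻¹ * (V * (Matrix.diagonal (fun i => (d i + 1)⁻¹) * ((Vᵀ * (Ψh⁻¹ * Ψh) * V) *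
            Matrix.diagonal (fun i => d i + 1)) * Vᵀ)) * Ψh := by noncomm_ring
      _ = 1 := by
          rw [hΨhinv, Matrix.mul_one, hVtV, Matrix.one_mul, Matrix.diagonal_mul_diagonal]
          have : (fun i => (d i + 1)⁻¹ * (d i + 1)) = fun _ => (1:ℝ) := by
            funext i; exact inv_mul_cancel₀ (he i)
          rw [this, Matrix.diagonal_one, Matrix.one_mul, hVVt, Matrix.mul_one, hΨhinv]
  -- Vᵀ G V = diagonal θ
  have hVGV : Vᵀ * G * V = Matrix.diagonal θ := by
    rw [hGeig]
    calc Vᵀ * (V * Matrix.diagonal θ * Vᵀ) * V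
        = (Vᵀ * V) * Matrix.diagonal θ * (Vᵀ * V) := by noncomm_ring
      _ = Matrix.diagonal θ := by rw [hVtV, Matrix.one_mul, Matrix.mul_one]
  -- trace of LHS
  have htr1 : ((Λhat * Λhatᵀ + Ψ)⁻¹ * S).trace = ∑ i, (d i + 1)⁻¹ * θ i := by
    rw [hinv]
    have : Ψh⁻¹ * (V * Matrix.diagonal (fun i => (d i + 1)⁻¹) * Vᵀ) * Ψh⁻¹ * S
        = Ψh⁻¹ * (V * (Matrix.diagonal (fun i => (d i + 1)⁻¹) * (Vᵀ * (Ψh⁻¹ * S)))) := by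
      noncomm_ring
    rw [this, Matrix.trace_mul_comm]
    have : V * (Matrix.diagonal (fun i => (d i + 1)⁻¹) * (Vᵀ * (Ψh⁻¹ * S))) * Ψh⁻¹
        = V * (Matrix.diagonal (fun i => (d i + 1)⁻¹) * (Vᵀ * (Ψh⁻¹ * S * Ψh⁻¹))) := by
      noncomm_ring
    rw [this, Matrix.trace_mul_comm]
    have : Matrix.diagonal (fun i => (d i + 1)⁻¹) * (Vᵀ * (Ψh⁻¹ * S * Ψh⁻¹)) * V
        = Matrix.diagonal (fun i => (d i + 1)⁻¹) * (Vᵀ * G * V) := by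
      rw [hG]; noncomm_ring
    rw [this, hVGV, Matrix.diagonal_mul_diagonal, Matrix.trace_diagonal]
  -- trace of tr(Ψ⁻¹ S)
  have hΨinv : Ψ⁻¹ = Ψh⁻¹ * Ψh⁻¹ := by
    apply Matrix.inv_eq_left_inv
    calc Ψh⁻¹ * Ψh⁻¹ * Ψ = Ψh⁻¹ * (Ψh⁻¹ * Ψh) * Ψh := by rw [← hΨhsq]; noncomm_ring
      _ = 1 := by rw [hΨhinv, Matrix.mul_one, hΨhinv]
  have htr2 : (Ψ⁻¹ * S).trace = ∑ i, θ i := by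
    rw [hΨinv, show Ψh⁻¹ * Ψh⁻¹ * S = Ψh⁻¹ * (Ψh⁻¹ * S) from by noncomm_ring,
      Matrix.trace_mul_comm, show Ψh⁻¹ * S * Ψh⁻¹ = G from hG.symm]
    have : G = V * (Matrix.diagonal θ * Vᵀ) := by rw [hGeig]; noncomm_ring
    rw [this, Matrix.trace_mul_comm, Matrix.mul_assoc, hVtV, Matrix.mul_one,
      Matrix.trace_diagonal]
  -- pointwise identity and sum wrap-up
  rw [htr1, htr2]
  have hpt : ∀ i, θ i - (d i + 1)⁻¹ * θ i = d i := by
    intro i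
    by_cases hiq : (i : ℕ) < q
    · by_cases hθ1 : θ i - 1 ≤ 0
      · have : d i = 0 := by simp [hd, hiq, max_eq_right hθ1]
        rw [this]; simp
      · push_neg at hθ1
        have hdi : d i = θ i - 1 := by
          simp [hd, hiq, max_eq_left (le_of_lt (by linarith : (0:ℝ) < θ i - 1))]
        rw [hdi]
        have hθne : θ i ≠ 0 := by linarith
        field_simp
        ring
    · have : d i = 0 := by simp [hd, hiq]
      rw [this]; simp
  have hsum : ∑ i, θ i - ∑ i, (d i + 1)⁻¹ * θ i = ∑ i, d i := by
    rw [← Finset.sum_sub_distrib]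
    exact Finset.sum_congr rfl fun i _ => hpt i
  have hsum2 : ∑ i : Fin p, d i = ∑ j : Fin q, max (θ (Fin.castLE hq.le j) - 1) 0 := by
    rw [sum_trunc hq.le d (fun i hi => by simp [hd, Nat.not_lt.mpr hi])]
    exact Finset.sum_congr rfl fun j _ => by simp [hd, j.isLt]
  linarith [hsum, hsum2]
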